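/- Let μ_0, μ_1 be Borel probability measures on (0,∞) with ∫ (x + 1/x) dμ_i(x) < ∞ for i = 0,1, and set ν_i = Id_†μ_i. Then ν_0 and ν_1 are Borel probability measures on (0,∞) with finite second moments, and μ_0 ≼_cx μ_1 if and only if ν_0 ≼_cx ν_1. -/

import Mathlib

open MeasureTheory Set

/-- The reflected measure `Id_† μ`: the pushforward under `x ↦ 1/x` of the measure
with density `x / m` with respect to `μ`, where `m = ∫ x ∂μ` is the mean of `μ`. -/
noncomputable def reflect (μ : Measure ℝ) : Measure ℝ :=
  Measure.map (fun x => x⁻¹) (μ.withDensity (fun x => ENNReal.ofReal (x / ∫ y, y ∂μ)))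

/-- Convex order: `η ≼_cx ρ` iff `∫ f dη ≤ ∫ f dρ` (with integrals valued in `[0,∞]`)
for every convex function `f : ℝ → [0,∞)`. -/
def ConvexOrder (η ρ : Measure ℝ) : Prop :=
  ∀ f : ℝ → ℝ, ConvexOn ℝ Set.univ f → (∀ x, 0 ≤ f x) →
    ∫⁻ x, ENNReal.ofReal (f x) ∂η ≤ ∫⁻ x, ENNReal.ofReal (f x) ∂ρ

open Filter
open scoped ENNReal Topology Classical

noncomputable section Aux

/-! ### Ramp functions and their finite maxima -/

def ramp (a b : ℝ) (y : ℝ) : ℝ := max (a * y + b) 0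

lemma ramp_nonneg (a b y : ℝ) : 0 ≤ ramp a b y := le_max_right _ _

lemma convexOn_affine (a b : ℝ) : ConvexOn ℝ univ (fun y : ℝ => a * y + b) := by
  refine ⟨convex_univ, fun x _ y _ p q hp hq hpq => le_of_eq ?_⟩
  simp only [smul_eq_mul]
  linear_combination (-b) * hpq

lemma convexOn_ramp (a b : ℝ) : ConvexOn ℝ univ (ramp a b) :=
  (convexOn_affine a b).sup (convexOn_const 0 convex_univ)

lemma continuous_ramp (a b : ℝ) : Continuous (ramp a b) :=
  ((continuous_const.mul continuous_id).add continuous_const).max continuous_const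

def rmax (a b : ℕ → ℝ) : ℕ → ℝ → ℝ
  | 0 => ramp (a 0) (b 0)
  | (N+1) => fun y => max (rmax a b N y) (ramp (a (N+1)) (b (N+1)) y)

lemma rmax_nonneg (a b : ℕ → ℝ) (N : ℕ) (y : ℝ) : 0 ≤ rmax a b N y := by
  induction N with
  | zero => exact ramp_nonneg _ _ _
  | succ n ih => exact le_trans ih (le_max_left _ _)

lemma convexOn_rmax (a b : ℕ → ℝ) (N : ℕ) : ConvexOn ℝ univ (rmax a b N) := by
  induction N with
  | zero => exact convexOn_ramp _ _
  | succ n ih => exact ih.sup (convexOn_ramp _ _)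

lemma continuous_rmax (a b : ℕ → ℝ) (N : ℕ) : Continuous (rmax a b N) := by
  induction N with
  | zero => exact continuous_ramp _ _
  | succ n ih => exact ih.max (continuous_ramp _ _)

lemma rmax_mono (a b : ℕ → ℝ) (y : ℝ) : Monotone (fun N => rmax a b N y) :=
  monotone_nat_of_le_succ fun n => le_max_left _ _

lemma ramp_le_rmax (a b : ℕ → ℝ) {n N : ℕ} (h : n ≤ N) (y : ℝ) :
    ramp (a n) (b n) y ≤ rmax a b N y := by
  induction N with
  | zero => simp_all [rmax, Nat.le_zero.mp h]
  | succ k ih =>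
    rcases Nat.lt_succ_iff_lt_or_eq.mp (Nat.lt_succ_of_le h) with h' | h'
    · exact le_trans (ih (Nat.lt_succ_iff.mp h')) (le_max_left _ _)
    · subst h'; exact le_max_right _ _

lemma rmax_le (a b : ℕ → ℝ) {f : ℝ → ℝ} (h : ∀ n y, ramp (a n) (b n) y ≤ f y) (N : ℕ) (y : ℝ) :
    rmax a b N y ≤ f y := by
  induction N with
  | zero => exact h 0 y
  | succ n ih => exact max_le ih (h (n+1) y)

lemma rmax_flip (a b : ℕ → ℝ) (N : ℕ) {x : ℝ} (hx : 0 < x) :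
    x * rmax a b N x⁻¹ = rmax b a N x := by
  have key : ∀ c d : ℝ, x * ramp c d x⁻¹ = ramp d c x := by
    intro c d
    rw [ramp, ramp, mul_max_of_nonneg _ _ hx.le, mul_zero, mul_add]
    congr 1
    field_simp
    ring
  induction N with
  | zero => exact key _ _
  | succ n ih =>
    show x * max (rmax a b n x⁻¹) _ = max (rmax b a n x) _
    rw [mul_max_of_nonneg _ _ hx.le, ih, key]

lemma convexOn_rmax_div (a b : ℕ → ℝ) (N : ℕ) {c : ℝ} (hc : 0 ≤ c) :
    ConvexOn ℝ univ (fun x => rmax a b N x / c) := by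
  have h := (convexOn_rmax a b N).smul (inv_nonneg.mpr hc)
  convert h using 2 with x
  · rfl
  · rfl
  · simp [smul_eq_mul, div_eq_inv_mul]

lemma convexOn_rmax_mul (a b : ℕ → ℝ) (N : ℕ) {c : ℝ} (hc : 0 ≤ c) :
    ConvexOn ℝ univ (fun x => c * rmax a b N x) := by
  have h := (convexOn_rmax a b N).smul hc
  simpa only [smul_eq_mul] using h

/-! ### Supporting lines and approximation from below by ramps -/

lemma exists_supporting_line {f : ℝ → ℝ} (hf : ConvexOn ℝ univ f) (y₀ : ℝ) :
    ∃ s : ℝ, ∀ y, s * (y - y₀) + f y₀ ≤ f y := by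
  set S : Set ℝ := (fun z => (f z - f y₀) / (z - y₀)) '' Ioi y₀ with hS
  have hne : S.Nonempty := ⟨_, ⟨y₀ + 1, by simp, rfl⟩⟩
  have hslope : ∀ u v w : ℝ, u < v → v < w →
      (f v - f u) / (v - u) ≤ (f w - f v) / (w - v) := fun u v w h1 h2 =>
    hf.slope_mono_adjacent (mem_univ u) (mem_univ w) h1 h2
  have hbdd : BddBelow S := by
    refine ⟨(f y₀ - f (y₀ - 1)) / (y₀ - (y₀ - 1)), ?_⟩
    rintro _ ⟨z, hz, rfl⟩
    exact hslope _ _ _ (by linarith) hz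
  refine ⟨sInf S, fun y => ?_⟩
  rcases lt_trichotomy y y₀ with h | h | h
  · have h1 : (f y₀ - f y) / (y₀ - y) ≤ sInf S := by
      refine le_csInf hne ?_
      rintro _ ⟨z, hz, rfl⟩
      exact hslope _ _ _ h hz
    have h2 : 0 < y₀ - y := by linarith
    rw [div_le_iff₀ h2] at h1
    nlinarith [h1]
  · simp [h]
  · have h1 : sInf S ≤ (f y - f y₀) / (y - y₀) := csInf_le hbdd ⟨y, h, rfl⟩
    have h2 : 0 < y - y₀ := by linarith
    rw [le_div_iff₀ h2] at h1
    linarith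

lemma between_mul_le {s p t : ℝ} (h : (0 ≤ p ∧ p ≤ s) ∨ (s ≤ p ∧ p ≤ 0)) :
    p * t ≤ max (s * t) 0 := by
  rcases le_total 0 t with ht | ht <;> rcases h with ⟨h1, h2⟩ | ⟨h1, h2⟩
  · exact le_max_of_le_left (by nlinarith)
  · exact le_max_of_le_right (by nlinarith)
  · exact le_max_of_le_right (by nlinarith)
  · exact le_max_of_le_left (by nlinarith)

lemma exists_rat_line {f : ℝ → ℝ} (hf : ConvexOn ℝ univ f) (h0 : ∀ x, 0 ≤ f x)
    (y₀ : ℝ) {ε : ℝ} (hε : 0 < ε) :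
    ∃ p q : ℚ, (∀ y, (p : ℝ) * y + (q : ℝ) ≤ f y) ∧ f y₀ - ε < (p : ℝ) * y₀ + (q : ℝ) := by
  obtain ⟨s, hs⟩ := exists_supporting_line hf y₀
  rcases eq_or_ne s 0 with rfl | hsne
  · obtain ⟨q, hq1, hq2⟩ := exists_rat_btwn (show f y₀ - ε < f y₀ by linarith)
    refine ⟨0, q, fun y => ?_, ?_⟩
    · have := hs y; push_cast; nlinarith
    · push_cast; linarith
  · set t₀ : ℝ := f y₀ / s with ht₀
    set δ : ℝ := ε / (|t₀| + 1) with hδ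
    have habs0 : (0:ℝ) ≤ |t₀| := abs_nonneg _
    have hδpos : 0 < δ := div_pos hε (by linarith)
    have hst₀ : s * t₀ = f y₀ := by rw [ht₀]; field_simp
    have hδε : δ * (|t₀| + 1) = ε := by
      rw [hδ]; field_simp
    have hp : ∃ p : ℚ, ((0 ≤ (p:ℝ) ∧ (p:ℝ) ≤ s) ∨ (s ≤ (p:ℝ) ∧ (p:ℝ) ≤ 0)) ∧ |s - (p:ℝ)| ≤ δ := by
      rcases hsne.lt_or_gt with hneg | hpos
      · obtain ⟨p, hp1, hp2⟩ :=
          exists_rat_btwn (show s < min (s + δ) 0 from lt_min (by linarith) hneg)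
        have h1 := lt_of_lt_of_le hp2 (min_le_left _ _)
        have h2 := lt_of_lt_of_le hp2 (min_le_right _ _)
        exact ⟨p, Or.inr ⟨hp1.le, h2.le⟩, abs_le.mpr ⟨by linarith, by linarith⟩⟩
      · obtain ⟨p, hp1, hp2⟩ :=
          exists_rat_btwn (show max (s - δ) 0 < s from max_lt (by linarith) hpos)
        have h1 := lt_of_le_of_lt (le_max_left (s - δ) 0) hp1
        have h2 := lt_of_le_of_lt (le_max_right (s - δ) 0) hp1
        exact ⟨p, Or.inl ⟨h2.le, hp2.le⟩, abs_le.mpr ⟨by linarith, by linarith⟩⟩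
    obtain ⟨p, hbet, hpd⟩ := hp
    set ystar : ℝ := y₀ - t₀ with hystar
    obtain ⟨q, hq1, hq2⟩ :=
      exists_rat_btwn (show -(p:ℝ) * ystar - δ < -(p:ℝ) * ystar by linarith)
    refine ⟨p, q, fun y => ?_, ?_⟩
    · have h1 : (p:ℝ) * (y - ystar) ≤ max (s * (y - ystar)) 0 := between_mul_le hbet
      have h2 : s * (y - ystar) = s * (y - y₀) + f y₀ := by
        rw [hystar]; linear_combination hst₀
      have h3 := hs y
      have h4 := h0 y
      have h5 : max (s * (y - ystar)) 0 ≤ f y := max_le (by linarith) h4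
      have hexp : (p:ℝ) * (y - ystar) = (p:ℝ) * y - (p:ℝ) * ystar := by ring
      linarith
    · have h5 : (s - (p:ℝ)) * t₀ ≤ |s - (p:ℝ)| * |t₀| := by
        calc (s - (p:ℝ)) * t₀ ≤ |(s - (p:ℝ)) * t₀| := le_abs_self _
          _ = |s - (p:ℝ)| * |t₀| := abs_mul _ _
      have h6 : |s - (p:ℝ)| * |t₀| ≤ δ * |t₀| := mul_le_mul_of_nonneg_right hpd habs0
      have hmul : (s - (p:ℝ)) * t₀ = s * t₀ - (p:ℝ) * t₀ := by ring
      have h7 : f y₀ - δ * |t₀| ≤ (p:ℝ) * t₀ := by linarith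
      have hexp : (p:ℝ) * y₀ - (p:ℝ) * ystar = (p:ℝ) * t₀ := by rw [hystar]; ring
      have h8 : f y₀ - ε = f y₀ - δ * (|t₀| + 1) := by rw [hδε]
      linarith [hq1]

lemma exists_ramps {f : ℝ → ℝ} (hf : ConvexOn ℝ univ f) (h0 : ∀ x, 0 ≤ f x) :
    ∃ a b : ℕ → ℝ, (∀ n y, ramp (a n) (b n) y ≤ f y) ∧
      ∀ y, ∀ ε : ℝ, 0 < ε → ∃ n, f y - ε < ramp (a n) (b n) y := by
  set e : ℕ ≃ ℚ × ℚ := (Denumerable.eqv (ℚ × ℚ)).symm with he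
  set P : ℚ × ℚ → Prop := fun pq => ∀ y, (pq.1 : ℝ) * y + (pq.2 : ℝ) ≤ f y with hP
  refine ⟨fun n => if P (e n) then ((e n).1 : ℝ) else 0,
          fun n => if P (e n) then ((e n).2 : ℝ) else 0, fun n y => ?_, fun y ε hε => ?_⟩
  · by_cases h : P (e n)
    · simp only [if_pos h]
      exact max_le (h y) (h0 y)
    · simp only [if_neg h, ramp]
      simpa using h0 y
  · obtain ⟨p, q, hline, hval⟩ := exists_rat_line hf h0 y hε
    refine ⟨e.symm (p, q), ?_⟩
    have hep : e (e.symm (p, q)) = (p, q) := e.apply_symm_apply _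
    simp only [hep, ramp, if_pos (show P (p, q) from hline)]
    exact lt_of_lt_of_le hval (le_max_left _ _)

lemma iSup_ofReal_rmax {f : ℝ → ℝ} {a b : ℕ → ℝ}
    (hle : ∀ n y, ramp (a n) (b n) y ≤ f y)
    (hdense : ∀ y, ∀ ε : ℝ, 0 < ε → ∃ n, f y - ε < ramp (a n) (b n) y) (y : ℝ) :
    (⨆ N, ENNReal.ofReal (rmax a b N y)) = ENNReal.ofReal (f y) := by
  apply le_antisymm
  · exact iSup_le fun N => ENNReal.ofReal_le_ofReal (rmax_le a b hle N y)
  · refine ENNReal.le_of_forall_pos_le_add fun ε hε hlt => ?_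
    obtain ⟨n, hn⟩ := hdense y ε (by exact_mod_cast hε)
    calc ENNReal.ofReal (f y) ≤ ENNReal.ofReal (ramp (a n) (b n) y + ε) :=
          ENNReal.ofReal_le_ofReal (by linarith)
      _ ≤ ENNReal.ofReal (ramp (a n) (b n) y) + ENNReal.ofReal ε := ENNReal.ofReal_add_le
      _ ≤ (⨆ N, ENNReal.ofReal (rmax a b N y)) + ε := by
          gcongr
          · exact le_trans (ENNReal.ofReal_le_ofReal (ramp_le_rmax a b le_rfl y))
              (le_iSup (fun N => ENNReal.ofReal (rmax a b N y)) n)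
          · simp [ENNReal.ofReal_coe_nnreal]

lemma lintegral_eq_iSup_rmax (η : Measure ℝ) {f : ℝ → ℝ} {a b : ℕ → ℝ}
    (hle : ∀ n y, ramp (a n) (b n) y ≤ f y)
    (hdense : ∀ y, ∀ ε : ℝ, 0 < ε → ∃ n, f y - ε < ramp (a n) (b n) y) :
    ∫⁻ y, ENNReal.ofReal (f y) ∂η = ⨆ N, ∫⁻ y, ENNReal.ofReal (rmax a b N y) ∂η := by
  rw [← lintegral_iSup (fun N => (continuous_rmax a b N).measurable.ennreal_ofReal)
      (fun N M h y => ENNReal.ofReal_le_ofReal (rmax_mono a b y h))]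
  exact lintegral_congr fun y => (iSup_ofReal_rmax hle hdense y).symm

/-! ### Basic facts about `reflect` -/

lemma ofReal_max0 (y : ℝ) : ENNReal.ofReal (max y 0) = ENNReal.ofReal y := by
  rcases le_total y 0 with h | h
  · rw [max_eq_right h, ENNReal.ofReal_zero, Eq.comm, ENNReal.ofReal_eq_zero]
    exact h
  · rw [max_eq_left h]

section Measures
variable {μ : Measure ℝ} [IsProbabilityMeasure μ]

omit [IsProbabilityMeasure μ] in
lemma ae_pos (hsupp : μ (Set.Ioi (0:ℝ))ᶜ = 0) : ∀ᵐ x ∂μ, 0 < x := by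
  rw [ae_iff]
  simpa [compl_setOf, Ioi] using hsupp

omit [IsProbabilityMeasure μ] in
lemma int_id (hsupp : μ (Set.Ioi (0:ℝ))ᶜ = 0) (hint : Integrable (fun x => x + x⁻¹) μ) :
    Integrable (fun x : ℝ => x) μ := by
  refine hint.mono' aestronglyMeasurable_id ?_
  filter_upwards [ae_pos hsupp] with x hx
  rw [Real.norm_eq_abs, abs_of_pos hx]
  have : 0 < x⁻¹ := inv_pos.mpr hx
  linarith

omit [IsProbabilityMeasure μ] in
lemma int_inv (hsupp : μ (Set.Ioi (0:ℝ))ᶜ = 0) (hint : Integrable (fun x => x + x⁻¹) μ) :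
    Integrable (fun x : ℝ => x⁻¹) μ := by
  refine hint.mono' (measurable_inv.aestronglyMeasurable) ?_
  filter_upwards [ae_pos hsupp] with x hx
  rw [Real.norm_eq_abs, abs_of_pos (inv_pos.mpr hx)]
  linarith

lemma mean_pos (hsupp : μ (Set.Ioi (0:ℝ))ᶜ = 0) (hint : Integrable (fun x => x + x⁻¹) μ) :
    0 < ∫ y, y ∂μ := by
  rw [integral_pos_iff_support_of_nonneg_ae ?_ (int_id hsupp hint)]
  · have h1 : μ (Set.Ioi (0:ℝ)) = 1 := by
      have := measure_add_measure_compl (μ := μ)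
        (measurableSet_Ioi : MeasurableSet (Set.Ioi (0:ℝ)))
      rw [hsupp, add_zero] at this
      simp [this]
    have h2 : Set.Ioi (0:ℝ) ⊆ Function.support (fun y : ℝ => y) := by
      intro x hx; exact ne_of_gt hx
    calc (0:ℝ≥0∞) < 1 := by norm_num
      _ = μ (Set.Ioi (0:ℝ)) := h1.symm
      _ ≤ μ (Function.support (fun y : ℝ => y)) := measure_mono h2
  · filter_upwards [ae_pos hsupp] with x hx; exact hx.le

omit [IsProbabilityMeasure μ] in
lemma lintegral_reflect (μ : Measure ℝ) {g : ℝ → ℝ≥0∞} (hg : Measurable g) :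
    ∫⁻ y, g y ∂(reflect μ) =
      ∫⁻ x, g x⁻¹ * ENNReal.ofReal (x / ∫ y, y ∂μ) ∂μ := by
  rw [reflect, lintegral_map hg measurable_inv]
  have := lintegral_withDensity_eq_lintegral_mul μ
      (f := fun x : ℝ => ENNReal.ofReal (x / ∫ y, y ∂μ))
      ((measurable_id'.div_const _).ennreal_ofReal) (g := fun x : ℝ => g x⁻¹)
      (hg.comp measurable_inv)
  rw [this]
  exact lintegral_congr fun x => mul_comm _ _

omit [IsProbabilityMeasure μ] in
lemma lintegral_reflect_ofReal (hsupp : μ (Set.Ioi (0:ℝ))ᶜ = 0)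
    {F : ℝ → ℝ} (hF : Measurable F) (hFnn : ∀ y, 0 ≤ F y) :
    ∫⁻ y, ENNReal.ofReal (F y) ∂(reflect μ) =
      ∫⁻ x, ENNReal.ofReal (x * F x⁻¹ / ∫ y, y ∂μ) ∂μ := by
  rw [lintegral_reflect μ hF.ennreal_ofReal]
  refine lintegral_congr_ae ?_
  filter_upwards [ae_pos hsupp] with x hx
  rw [← ENNReal.ofReal_mul (hFnn _)]
  congr 1
  ring

lemma reflect_prob (hsupp : μ (Set.Ioi (0:ℝ))ᶜ = 0) (hint : Integrable (fun x => x + x⁻¹) μ) :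
    IsProbabilityMeasure (reflect μ) := by
  constructor
  have h := lintegral_reflect_ofReal (μ := μ) hsupp (F := fun _ => (1:ℝ))
    measurable_const (fun _ => zero_le_one)
  have h2 : ∫⁻ y, ENNReal.ofReal ((fun _ : ℝ => (1:ℝ)) y) ∂(reflect μ) = reflect μ Set.univ := by
    simp
  rw [h2] at h
  rw [h]
  have hm := mean_pos hsupp hint
  have heq : ∫⁻ x, ENNReal.ofReal (x * (1:ℝ) / ∫ y, y ∂μ) ∂μ
      = ENNReal.ofReal (∫ x, x / ∫ y, y ∂μ ∂μ) := by
    rw [ofReal_integral_eq_lintegral_ofReal ((int_id hsupp hint).div_const _) ?_]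
    · exact lintegral_congr fun x => by rw [mul_one]
    · filter_upwards [ae_pos hsupp] with x hx
      exact div_nonneg hx.le hm.le
  rw [heq, integral_div, div_self hm.ne']
  simp

omit [IsProbabilityMeasure μ] in
lemma reflect_supp (hsupp : μ (Set.Ioi (0:ℝ))ᶜ = 0) :
    (reflect μ) (Set.Ioi (0:ℝ))ᶜ = 0 := by
  rw [reflect, Measure.map_apply measurable_inv measurableSet_Ioi.compl]
  have hpre : (fun x : ℝ => x⁻¹) ⁻¹' (Set.Ioi (0:ℝ))ᶜ = (Set.Ioi (0:ℝ))ᶜ := by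
    ext x; simp [inv_pos]
  rw [hpre, withDensity_apply _ measurableSet_Ioi.compl]
  exact setLIntegral_measure_zero _ _ hsupp

lemma reflect_mean (hsupp : μ (Set.Ioi (0:ℝ))ᶜ = 0) (hint : Integrable (fun x => x + x⁻¹) μ) :
    ∫⁻ y, ENNReal.ofReal y ∂(reflect μ) = ENNReal.ofReal (∫ y, y ∂μ)⁻¹ := by
  have h1 : ∫⁻ y, ENNReal.ofReal y ∂(reflect μ)
      = ∫⁻ y, ENNReal.ofReal (max y 0) ∂(reflect μ) :=
    lintegral_congr fun y => (ofReal_max0 y).symm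
  rw [h1, lintegral_reflect_ofReal hsupp (F := fun y : ℝ => max y 0)
    (measurable_id'.max measurable_const) (fun y => le_max_right _ _)]
  have h2 : ∫⁻ x, ENNReal.ofReal (x * max x⁻¹ 0 / ∫ y, y ∂μ) ∂μ
      = ∫⁻ _, ENNReal.ofReal (∫ y, y ∂μ)⁻¹ ∂μ := by
    refine lintegral_congr_ae ?_
    filter_upwards [ae_pos hsupp] with x hx
    rw [max_eq_left (inv_pos.mpr hx).le, mul_inv_cancel₀ hx.ne']
    congr 1
    rw [one_div]
  rw [h2, lintegral_const, measure_univ, mul_one]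

lemma reflect_sq_int (hsupp : μ (Set.Ioi (0:ℝ))ᶜ = 0) (hint : Integrable (fun x => x + x⁻¹) μ) :
    Integrable (fun y : ℝ => y ^ 2) (reflect μ) := by
  have hm := mean_pos hsupp hint
  refine ⟨(continuous_pow 2).aestronglyMeasurable, ?_⟩
  rw [hasFiniteIntegral_iff_ofReal (Eventually.of_forall fun y => sq_nonneg y)]
  rw [lintegral_reflect_ofReal hsupp (F := fun y : ℝ => y ^ 2)
    (measurable_id'.pow_const 2) (fun y => sq_nonneg y)]
  have h2 : ∫⁻ x, ENNReal.ofReal (x * (x⁻¹) ^ 2 / ∫ y, y ∂μ) ∂μ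
      = ∫⁻ x, ENNReal.ofReal (x⁻¹ / ∫ y, y ∂μ) ∂μ := by
    refine lintegral_congr_ae ?_
    filter_upwards [ae_pos hsupp] with x hx
    congr 2
    field_simp
  rw [h2, ← ofReal_integral_eq_lintegral_ofReal ((int_inv hsupp hint).div_const _) ?_]
  · exact ENNReal.ofReal_lt_top
  · filter_upwards [ae_pos hsupp] with x hx
    exact div_nonneg (inv_pos.mpr hx).le hm.le

lemma reflect_rmax (hsupp : μ (Set.Ioi (0:ℝ))ᶜ = 0) (a b : ℕ → ℝ) (N : ℕ) :
    ∫⁻ y, ENNReal.ofReal (rmax a b N y) ∂(reflect μ) =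
      ∫⁻ x, ENNReal.ofReal (rmax b a N x / ∫ y, y ∂μ) ∂μ := by
  rw [lintegral_reflect_ofReal hsupp (continuous_rmax a b N).measurable (rmax_nonneg a b N)]
  refine lintegral_congr_ae ?_
  filter_upwards [ae_pos hsupp] with x hx
  rw [rmax_flip a b N hx]

lemma reflect_rmax' (hsupp : μ (Set.Ioi (0:ℝ))ᶜ = 0) (hint : Integrable (fun x => x + x⁻¹) μ)
    (a b : ℕ → ℝ) (N : ℕ) :
    ∫⁻ y, ENNReal.ofReal ((∫ y, y ∂μ) * rmax a b N y) ∂(reflect μ) =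
      ∫⁻ x, ENNReal.ofReal (rmax b a N x) ∂μ := by
  have hm := mean_pos hsupp hint
  rw [lintegral_reflect_ofReal hsupp (F := fun y => (∫ y, y ∂μ) * rmax a b N y) (measurable_const.mul (continuous_rmax a b N).measurable)
    (fun y => mul_nonneg hm.le (rmax_nonneg a b N y))]
  refine lintegral_congr_ae ?_
  filter_upwards [ae_pos hsupp] with x hx
  rw [← rmax_flip a b N hx]
  congr 1
  field_simp

end Measures

/-! ### Equality of means under convex order -/

lemma mean_eq_of_convexOrder (η ρ : Measure ℝ) [IsProbabilityMeasure η] [IsProbabilityMeasure ρ]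
    (hη : η (Set.Ioi (0:ℝ))ᶜ = 0) (hρ : ρ (Set.Ioi (0:ℝ))ᶜ = 0)
    (hMη : ∫⁻ x, ENNReal.ofReal x ∂η ≠ ⊤) (hMρ : ∫⁻ x, ENNReal.ofReal x ∂ρ ≠ ⊤)
    (h : ConvexOrder η ρ) :
    ∫⁻ x, ENNReal.ofReal x ∂η = ∫⁻ x, ENNReal.ofReal x ∂ρ := by
  set Mη := ∫⁻ x, ENNReal.ofReal x ∂η with hMη'
  set Mρ := ∫⁻ x, ENNReal.ofReal x ∂ρ with hMρ'
  have hxpos : ∀ x : ℝ, 0 ≤ max x 0 := fun x => le_max_right _ _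
  apply le_antisymm
  · have h1 := h (fun x => max x 0)
      ((convexOn_id convex_univ).sup (convexOn_const 0 convex_univ)) hxpos
    calc Mη = ∫⁻ x, ENNReal.ofReal (max x 0) ∂η := lintegral_congr fun x => (ofReal_max0 x).symm
      _ ≤ ∫⁻ x, ENNReal.ofReal (max x 0) ∂ρ := h1
      _ = Mρ := lintegral_congr fun x => ofReal_max0 x
  · -- define truncations
    set I : ℕ → Measure ℝ → ℝ≥0∞ := fun c ν => ∫⁻ x, ENNReal.ofReal (ramp (-1) c x) ∂ν with hI
    set A : ℕ → Measure ℝ → ℝ≥0∞ := fun c ν => ∫⁻ x, ENNReal.ofReal (ramp 1 (-(c:ℝ)) x) ∂ν with hA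
    have key_id : ∀ (c : ℕ) (ν : Measure ℝ), IsProbabilityMeasure ν → ν (Set.Ioi (0:ℝ))ᶜ = 0 →
        I c ν + (∫⁻ x, ENNReal.ofReal x ∂ν) = ENNReal.ofReal (c:ℝ) + A c ν := by
      intro c ν hprob hν
      have hpt : ∀ᵐ x ∂ν, ENNReal.ofReal (ramp (-1) c x) + ENNReal.ofReal x
          = ENNReal.ofReal (c:ℝ) + ENNReal.ofReal (ramp 1 (-(c:ℝ)) x) := by
        filter_upwards [ae_pos hν] with x hx
        have hc : (0:ℝ) ≤ (c:ℝ) := Nat.cast_nonneg c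
        rw [← ENNReal.ofReal_add (ramp_nonneg _ _ _) hx.le,
          ← ENNReal.ofReal_add hc (ramp_nonneg _ _ _)]
        congr 1
        rcases le_total x (c:ℝ) with hxc | hxc
        · rw [ramp, ramp, max_eq_left (by linarith), max_eq_right (by linarith)]
          ring
        · rw [ramp, ramp, max_eq_right (by linarith), max_eq_left (by linarith)]
          ring
      have hl := lintegral_congr_ae hpt
      rw [lintegral_add_left ((continuous_ramp _ _).measurable.ennreal_ofReal),
        lintegral_add_left measurable_const] at hl
      rw [lintegral_const, measure_univ, mul_one] at hl
      exact hl
    have hIle : ∀ c : ℕ, I c η ≤ I c ρ := fun c =>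
      h (ramp (-1) c) (convexOn_ramp _ _) (ramp_nonneg _ _)
    have hAle : ∀ c : ℕ, A c ρ ≤ Mρ := by
      intro c
      refine lintegral_mono_ae ?_
      filter_upwards [ae_pos hρ] with x hx
      refine ENNReal.ofReal_le_ofReal ?_
      rw [ramp]
      have hc : (0:ℝ) ≤ (c:ℝ) := Nat.cast_nonneg c
      refine max_le (by linarith) hx.le
    have key : ∀ c : ℕ, Mρ ≤ Mη + A c ρ := by
      intro c
      have h1 := key_id c η inferInstance hη
      have h2 := key_id c ρ inferInstance hρ
      have h3 : ENNReal.ofReal (c:ℝ) + (Mρ + A c η) ≤ ENNReal.ofReal (c:ℝ) + (Mη + A c ρ) := by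
        calc ENNReal.ofReal (c:ℝ) + (Mρ + A c η) = (I c η + Mη) + Mρ := by rw [h1]; ring
          _ ≤ (I c ρ + Mη) + Mρ := by gcongr; exact hIle c
          _ = (I c ρ + Mρ) + Mη := by ring
          _ = (ENNReal.ofReal (c:ℝ) + A c ρ) + Mη := by rw [h2]
          _ = ENNReal.ofReal (c:ℝ) + (Mη + A c ρ) := by ring
      have h4 := (ENNReal.add_le_add_iff_left (by simp : ENNReal.ofReal (c:ℝ) ≠ ⊤)).mp h3
      exact le_trans le_self_add h4
    have hAtend : Tendsto (fun c : ℕ => A c ρ) atTop (𝓝 0) := by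
      have h0 : (0:ℝ≥0∞) = ∫⁻ _, (0:ℝ≥0∞) ∂ρ := by simp
      rw [h0]
      refine tendsto_lintegral_of_dominated_convergence (fun x => ENNReal.ofReal x)
        (fun c => (continuous_ramp _ _).measurable.ennreal_ofReal) ?_ hMρ ?_
      · intro c
        filter_upwards [ae_pos hρ] with x hx
        refine ENNReal.ofReal_le_ofReal ?_
        rw [ramp]
        have hc : (0:ℝ) ≤ (c:ℝ) := Nat.cast_nonneg c
        exact max_le (by linarith) hx.le
      · refine Eventually.of_forall fun x => ?_
        refine Tendsto.congr' ?_ tendsto_const_nhds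
        rw [Filter.EventuallyEq, eventually_atTop]
        refine ⟨⌈x⌉₊, fun n hn => ?_⟩
        have hxn : x ≤ (n:ℝ) := le_trans (Nat.le_ceil x) (by exact_mod_cast hn)
        rw [ramp, one_mul, max_eq_right (by linarith), ENNReal.ofReal_zero]
    have hT : Tendsto (fun c : ℕ => Mη + A c ρ) atTop (𝓝 (Mη + 0)) :=
      Tendsto.const_add _ hAtend
    rw [add_zero] at hT
    exact ge_of_tendsto hT (Eventually.of_forall key)

end Aux

/-- For Borel probability measures `μ₀, μ₁` on `(0,∞)` with `∫ (x + 1/x) dμᵢ < ∞` and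
`νᵢ = Id_† μᵢ`, the measures `ν₀, ν₁` are Borel probability measures on `(0,∞)` with
finite second moments, and `μ₀ ≼_cx μ₁` iff `ν₀ ≼_cx ν₁`. -/
theorem stmt3 (μ₀ μ₁ : Measure ℝ) [IsProbabilityMeasure μ₀] [IsProbabilityMeasure μ₁]
    (hsupp₀ : μ₀ (Set.Ioi (0:ℝ))ᶜ = 0) (hsupp₁ : μ₁ (Set.Ioi (0:ℝ))ᶜ = 0)
    (hint₀ : Integrable (fun x => x + x⁻¹) μ₀)
    (hint₁ : Integrable (fun x => x + x⁻¹) μ₁) :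
    IsProbabilityMeasure (reflect μ₀) ∧ IsProbabilityMeasure (reflect μ₁) ∧
    (reflect μ₀) (Set.Ioi (0:ℝ))ᶜ = 0 ∧ (reflect μ₁) (Set.Ioi (0:ℝ))ᶜ = 0 ∧
    Integrable (fun x => x ^ 2) (reflect μ₀) ∧ Integrable (fun x => x ^ 2) (reflect μ₁) ∧
    (ConvexOrder μ₀ μ₁ ↔ ConvexOrder (reflect μ₀) (reflect μ₁)) := by
  have hm₀ := mean_pos hsupp₀ hint₀
  have hm₁ := mean_pos hsupp₁ hint₁
  have hprob₀ := reflect_prob hsupp₀ hint₀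
  have hprob₁ := reflect_prob hsupp₁ hint₁
  have hrs₀ := reflect_supp (μ := μ₀) hsupp₀
  have hrs₁ := reflect_supp (μ := μ₁) hsupp₁
  have hMη₀ : ∫⁻ x, ENNReal.ofReal x ∂μ₀ = ENNReal.ofReal (∫ y, y ∂μ₀) := by
    rw [ofReal_integral_eq_lintegral_ofReal (int_id hsupp₀ hint₀) ?_]
    filter_upwards [ae_pos hsupp₀] with x hx; exact hx.le
  have hMη₁ : ∫⁻ x, ENNReal.ofReal x ∂μ₁ = ENNReal.ofReal (∫ y, y ∂μ₁) := by
    rw [ofReal_integral_eq_lintegral_ofReal (int_id hsupp₁ hint₁) ?_]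
    filter_upwards [ae_pos hsupp₁] with x hx; exact hx.le
  refine ⟨hprob₀, hprob₁, hrs₀, hrs₁, reflect_sq_int hsupp₀ hint₀, reflect_sq_int hsupp₁ hint₁,
    ?_, ?_⟩
  · -- forward
    intro h
    -- equal means
    have hmean := mean_eq_of_convexOrder μ₀ μ₁ hsupp₀ hsupp₁
      (by rw [hMη₀]; exact ENNReal.ofReal_ne_top)
      (by rw [hMη₁]; exact ENNReal.ofReal_ne_top) h
    rw [hMη₀, hMη₁] at hmean
    have hm01 : ∫ y, y ∂μ₀ = ∫ y, y ∂μ₁ :=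
      (ENNReal.ofReal_eq_ofReal_iff hm₀.le hm₁.le).mp hmean
    intro f hf hfn
    obtain ⟨a, b, hle, hdense⟩ := exists_ramps hf hfn
    rw [lintegral_eq_iSup_rmax (reflect μ₀) hle hdense,
      lintegral_eq_iSup_rmax (reflect μ₁) hle hdense]
    refine iSup_mono fun N => ?_
    rw [reflect_rmax hsupp₀ a b N, reflect_rmax hsupp₁ a b N, ← hm01]
    exact h (fun x => rmax b a N x / ∫ y, y ∂μ₀) (convexOn_rmax_div b a N hm₀.le)
      (fun x => div_nonneg (rmax_nonneg b a N x) hm₀.le)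
  · -- reverse
    intro h
    have hmean := mean_eq_of_convexOrder (reflect μ₀) (reflect μ₁) hrs₀ hrs₁
      (by rw [reflect_mean hsupp₀ hint₀]; exact ENNReal.ofReal_ne_top)
      (by rw [reflect_mean hsupp₁ hint₁]; exact ENNReal.ofReal_ne_top) h
    rw [reflect_mean hsupp₀ hint₀, reflect_mean hsupp₁ hint₁] at hmean
    have hm01 : ∫ y, y ∂μ₀ = ∫ y, y ∂μ₁ := by
      have := (ENNReal.ofReal_eq_ofReal_iff (inv_nonneg.mpr hm₀.le)
        (inv_nonneg.mpr hm₁.le)).mp hmean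
      exact inv_injective this
    intro f hf hfn
    obtain ⟨a, b, hle, hdense⟩ := exists_ramps hf hfn
    rw [lintegral_eq_iSup_rmax μ₀ hle hdense, lintegral_eq_iSup_rmax μ₁ hle hdense]
    refine iSup_mono fun N => ?_
    rw [← reflect_rmax' hsupp₀ hint₀ b a N, ← reflect_rmax' hsupp₁ hint₁ b a N, ← hm01]
    exact h (fun y => (∫ y, y ∂μ₀) * rmax b a N y) (convexOn_rmax_mul b a N hm₀.le)
      (fun y => mul_nonneg hm₀.le (rmax_nonneg b a N y))
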